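/- The Maurer–Cartan forms of the extended model group satisfy the structure equations: dΦ₀ = 0, dΦₓ = Φₓ∧Φ₀, dΦ_y = Φ_y∧Φ₀, dΦ₂ = 2·Φ₂∧Φ₀ − Φₓ∧Φ_y, and dΦ₃ = 3·Φ₃∧Φ₀ − Φₓ∧Φ₂, as identities of 2-forms at every point of U = ℝ⁴ × (ℝ∖{0}). -/

import Mathlib

/-- The coordinate 1-form `dxᵢ` on `ℝ⁵`, as a continuous linear map. -/
noncomputable def dcoord (i : Fin 5) : (Fin 5 → ℝ) →L[ℝ] ℝ :=
  ContinuousLinearMap.proj i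

/-- `Φ₀ = dt/t` (coordinates `(x,y,u₁,u₂,t) = (a 0, a 1, a 2, a 3, a 4)`). -/
noncomputable def Phi0 : (Fin 5 → ℝ) → ((Fin 5 → ℝ) →L[ℝ] ℝ) :=
  fun a => (a 4)⁻¹ • dcoord 4

/-- `Φₓ = 2dx/t`. -/
noncomputable def Phix : (Fin 5 → ℝ) → ((Fin 5 → ℝ) →L[ℝ] ℝ) :=
  fun a => (2 / a 4) • dcoord 0

/-- `Φ_y = −2dy/t`. -/
noncomputable def Phiy : (Fin 5 → ℝ) → ((Fin 5 → ℝ) →L[ℝ] ℝ) :=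
  fun a => (-2 / a 4) • dcoord 1

/-- `Φ₂ = (du₁ − 2y dx + 2x dy)/t²`. -/
noncomputable def Phi2 : (Fin 5 → ℝ) → ((Fin 5 → ℝ) →L[ℝ] ℝ) :=
  fun a => ((a 4) ^ 2)⁻¹ • (dcoord 2 - (2 * a 1) • dcoord 0 + (2 * a 0) • dcoord 1)

/-- `Φ₃ = (du₂ − 2x du₁ + 2xy dx − (x²−y²) dy)/t³`. -/
noncomputable def Phi3 : (Fin 5 → ℝ) → ((Fin 5 → ℝ) →L[ℝ] ℝ) :=
  fun a => ((a 4) ^ 3)⁻¹ •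
    (dcoord 3 - (2 * a 0) • dcoord 2 + (2 * a 0 * a 1) • dcoord 0
      - ((a 0) ^ 2 - (a 1) ^ 2) • dcoord 1)

/-- The exterior derivative of a 1-form: `dω(a)(u,v) = Dω(a)(u)(v) − Dω(a)(v)(u)`. -/
noncomputable def extDer (ω : (Fin 5 → ℝ) → ((Fin 5 → ℝ) →L[ℝ] ℝ))
    (a u v : Fin 5 → ℝ) : ℝ :=
  fderiv ℝ ω a u v - fderiv ℝ ω a v u

/-- The wedge of two 1-forms: `(α∧β)(a)(u,v) = α(a)(u)·β(a)(v) − α(a)(v)·β(a)(u)`. -/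
noncomputable def wedge (α β : (Fin 5 → ℝ) → ((Fin 5 → ℝ) →L[ℝ] ℝ))
    (a u v : Fin 5 → ℝ) : ℝ :=
  α a u * β a v - α a v * β a u

section Aux

variable {a : Fin 5 → ℝ}

/-- derivative of the coordinate function -/
lemma hasFDeriv_coord (i : Fin 5) (a : Fin 5 → ℝ) :
    HasFDerivAt (fun b : Fin 5 → ℝ => b i) (dcoord i) a :=
  (dcoord i).hasFDerivAt

/-- derivative of `(t^n)⁻¹` -/
lemma hasFDeriv_invpow (n : ℕ) (h : a 4 ≠ 0) :
    HasFDerivAt (fun b : Fin 5 → ℝ => (b 4 ^ n)⁻¹)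
      ((-(n * a 4 ^ (n - 1)) / (a 4 ^ n) ^ 2) • dcoord 4) a := by
  have := ((hasDerivAt_pow n (a 4)).inv (pow_ne_zero n h)).comp_hasFDerivAt a (hasFDeriv_coord 4 a)
  exact this

end Aux

set_option maxHeartbeats 1000000
set_option synthInstance.maxHeartbeats 200000

/-- The structure equations of the Maurer–Cartan forms of the extended model group. -/
theorem stmt_13 :
    ∀ a : Fin 5 → ℝ, a 4 ≠ 0 → ∀ u v : Fin 5 → ℝ,
      extDer Phi0 a u v = 0 ∧
      extDer Phix a u v = wedge Phix Phi0 a u v ∧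
      extDer Phiy a u v = wedge Phiy Phi0 a u v ∧
      extDer Phi2 a u v = 2 * wedge Phi2 Phi0 a u v - wedge Phix Phiy a u v ∧
      extDer Phi3 a u v = 3 * wedge Phi3 Phi0 a u v - wedge Phix Phi2 a u v := by
  intro a h u v
  have h4 := hasFDeriv_coord 4 a
  have h0 := hasFDeriv_coord 0 a
  have h1 := hasFDeriv_coord 1 a
  have hinv1 := hasFDeriv_invpow (a := a) 1 h
  have hinv2 := hasFDeriv_invpow (a := a) 2 h
  have hinv3 := hasFDeriv_invpow (a := a) 3 h
  have hinv1' : HasFDerivAt (fun b : Fin 5 → ℝ => (b 4)⁻¹)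
      ((-(1 * a 4 ^ (1 - 1)) / (a 4 ^ 1) ^ 2) • dcoord 4) a := by
    simpa [pow_one] using hinv1
  -- Phi0
  have H0 : HasFDerivAt Phi0 ((((-(1 * a 4 ^ (1 - 1)) / (a 4 ^ 1) ^ 2) • dcoord 4)).smulRight
      (dcoord 4)) a := hinv1'.smul_const (dcoord 4)
  -- Phix
  have ex : Phix = fun b : Fin 5 → ℝ => (2 * (b 4)⁻¹) • dcoord 0 := by
    funext b; simp [Phix, div_eq_mul_inv]
  have Hx : HasFDerivAt Phix
      (((2:ℝ) • ((-(1 * a 4 ^ (1 - 1)) / (a 4 ^ 1) ^ 2) • dcoord 4)).smulRight (dcoord 0)) a := by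
    rw [ex]; exact (hinv1'.const_mul (2:ℝ)).smul_const (dcoord 0)
  -- Phiy
  have ey : Phiy = fun b : Fin 5 → ℝ => ((-2) * (b 4)⁻¹) • dcoord 1 := by
    funext b; simp [Phiy, div_eq_mul_inv]
  have Hy : HasFDerivAt Phiy
      (((-2:ℝ) • ((-(1 * a 4 ^ (1 - 1)) / (a 4 ^ 1) ^ 2) • dcoord 4)).smulRight (dcoord 1)) a := by
    rw [ey]; exact (hinv1'.const_mul (-2:ℝ)).smul_const (dcoord 1)
  -- Phi2 rewritten
  have e2 : Phi2 = fun b : Fin 5 → ℝ =>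
      (b 4 ^ 2)⁻¹ • dcoord 2 - (2 * b 1 * (b 4 ^ 2)⁻¹) • dcoord 0
        + (2 * b 0 * (b 4 ^ 2)⁻¹) • dcoord 1 := by
    funext b
    simp only [Phi2, smul_sub, smul_add, smul_smul]
    ring_nf
  have hf1 : HasFDerivAt (fun b : Fin 5 → ℝ => 2 * b 1 * (b 4 ^ 2)⁻¹)
      ((2 * a 1) • ((-(2 * a 4 ^ (2 - 1)) / (a 4 ^ 2) ^ 2) • dcoord 4)
        + (a 4 ^ 2)⁻¹ • ((2:ℝ) • dcoord 1)) a := by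
    have := (h1.const_mul (2:ℝ)).mul hinv2
    simpa [Pi.mul_def] using this
  have hf2 : HasFDerivAt (fun b : Fin 5 → ℝ => 2 * b 0 * (b 4 ^ 2)⁻¹)
      ((2 * a 0) • ((-(2 * a 4 ^ (2 - 1)) / (a 4 ^ 2) ^ 2) • dcoord 4)
        + (a 4 ^ 2)⁻¹ • ((2:ℝ) • dcoord 0)) a := by
    have := (h0.const_mul (2:ℝ)).mul hinv2
    simpa [Pi.mul_def] using this
  have H2 : HasFDerivAt Phi2
      ((((-(2 * a 4 ^ (2 - 1)) / (a 4 ^ 2) ^ 2) • dcoord 4).smulRight (dcoord 2)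
        - ((2 * a 1) • ((-(2 * a 4 ^ (2 - 1)) / (a 4 ^ 2) ^ 2) • dcoord 4)
            + (a 4 ^ 2)⁻¹ • ((2:ℝ) • dcoord 1)).smulRight (dcoord 0))
        + ((2 * a 0) • ((-(2 * a 4 ^ (2 - 1)) / (a 4 ^ 2) ^ 2) • dcoord 4)
            + (a 4 ^ 2)⁻¹ • ((2:ℝ) • dcoord 0)).smulRight (dcoord 1)) a := by
    rw [e2]
    exact ((hinv2.smul_const (dcoord 2)).sub (hf1.smul_const (dcoord 0))).add
      (hf2.smul_const (dcoord 1))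
  -- Phi3 rewritten
  have e3 : Phi3 = fun b : Fin 5 → ℝ =>
      (b 4 ^ 3)⁻¹ • dcoord 3 - (2 * b 0 * (b 4 ^ 3)⁻¹) • dcoord 2
        + (2 * b 0 * b 1 * (b 4 ^ 3)⁻¹) • dcoord 0
        - ((b 0 ^ 2 - b 1 ^ 2) * (b 4 ^ 3)⁻¹) • dcoord 1 := by
    funext b
    simp only [Phi3, smul_sub, smul_add, smul_smul]
    ring_nf
  have hg1 : HasFDerivAt (fun b : Fin 5 → ℝ => 2 * b 0 * (b 4 ^ 3)⁻¹)
      ((2 * a 0) • ((-(3 * a 4 ^ (3 - 1)) / (a 4 ^ 3) ^ 2) • dcoord 4)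
        + (a 4 ^ 3)⁻¹ • ((2:ℝ) • dcoord 0)) a := by
    simpa [Pi.mul_def] using (h0.const_mul (2:ℝ)).mul hinv3
  have hg2 : HasFDerivAt (fun b : Fin 5 → ℝ => 2 * b 0 * b 1 * (b 4 ^ 3)⁻¹)
      ((2 * a 0 * a 1) • ((-(3 * a 4 ^ (3 - 1)) / (a 4 ^ 3) ^ 2) • dcoord 4)
        + (a 4 ^ 3)⁻¹ • ((2 * a 0) • dcoord 1 + a 1 • ((2:ℝ) • dcoord 0))) a := by
    simpa [Pi.mul_def] using ((h0.const_mul (2:ℝ)).mul h1).mul hinv3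
  have hg3 : HasFDerivAt (fun b : Fin 5 → ℝ => (b 0 ^ 2 - b 1 ^ 2) * (b 4 ^ 3)⁻¹)
      ((a 0 ^ 2 - a 1 ^ 2) • ((-(3 * a 4 ^ (3 - 1)) / (a 4 ^ 3) ^ 2) • dcoord 4)
        + (a 4 ^ 3)⁻¹ • (((2:ℝ) * a 0 ^ 1) • dcoord 0 - ((2:ℝ) * a 1 ^ 1) • dcoord 1)) a := by
    have hp0 : HasFDerivAt (fun b : Fin 5 → ℝ => b 0 ^ 2) (((2:ℝ) * a 0 ^ 1) • dcoord 0) a :=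
      (hasDerivAt_pow 2 (a 0)).comp_hasFDerivAt (f := fun b : Fin 5 → ℝ => b 0) a h0
    have hp1 : HasFDerivAt (fun b : Fin 5 → ℝ => b 1 ^ 2) (((2:ℝ) * a 1 ^ 1) • dcoord 1) a :=
      (hasDerivAt_pow 2 (a 1)).comp_hasFDerivAt (f := fun b : Fin 5 → ℝ => b 1) a h1
    simpa [Pi.mul_def, Pi.sub_def] using (hp0.sub hp1).mul hinv3
  have H3 : HasFDerivAt Phi3
      (((((-(3 * a 4 ^ (3 - 1)) / (a 4 ^ 3) ^ 2) • dcoord 4).smulRight (dcoord 3)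
        - ((2 * a 0) • ((-(3 * a 4 ^ (3 - 1)) / (a 4 ^ 3) ^ 2) • dcoord 4)
            + (a 4 ^ 3)⁻¹ • ((2:ℝ) • dcoord 0)).smulRight (dcoord 2))
        + ((2 * a 0 * a 1) • ((-(3 * a 4 ^ (3 - 1)) / (a 4 ^ 3) ^ 2) • dcoord 4)
            + (a 4 ^ 3)⁻¹ • ((2 * a 0) • dcoord 1 + a 1 • ((2:ℝ) • dcoord 0))).smulRight
            (dcoord 0))
        - ((a 0 ^ 2 - a 1 ^ 2) • ((-(3 * a 4 ^ (3 - 1)) / (a 4 ^ 3) ^ 2) • dcoord 4)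
            + (a 4 ^ 3)⁻¹ • (((2:ℝ) * a 0 ^ 1) • dcoord 0
              - ((2:ℝ) * a 1 ^ 1) • dcoord 1)).smulRight (dcoord 1)) a := by
    rw [e3]
    exact (((hinv3.smul_const (dcoord 3)).sub (hg1.smul_const (dcoord 2))).add
      (hg2.smul_const (dcoord 0))).sub (hg3.smul_const (dcoord 1))
  refine ⟨?_, ?_, ?_, ?_, ?_⟩
  · rw [extDer, H0.fderiv]
    simp [dcoord]
    ring
  · rw [extDer, Hx.fderiv, wedge, Phix, Phi0, dcoord]
    simp
    field_simp
    ring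
  · rw [extDer, Hy.fderiv, wedge, Phiy, Phi0, dcoord]
    simp
    field_simp
    ring
  · rw [extDer, H2.fderiv, wedge, wedge, Phi2, Phix, Phiy, Phi0, dcoord]
    simp
    field_simp
    ring
  · rw [extDer, H3.fderiv, wedge, wedge, Phi3, Phix, Phi2, Phi0, dcoord]
    simp
    field_simp
    ring
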